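/- Let f₁ : ℝⁿ → ℝⁿ and f₂ : ℝⁿ → ℝⁿˣᵐ be continuous, let (uₙ) converge weakly in L²([0,T];ℝᵐ) to ū, let xₙ₀ → x̄₀ in ℝⁿ, and suppose the trajectories xₙ of ẋₙ = f₁(xₙ) + f₂(xₙ)·uₙ, xₙ(0) = xₙ₀, converge uniformly on [0,T] to a function x̂. Then x̂ is the trajectory of ẋ = f₁(x) + f₂(x)·ū with x(0) = x̄₀. -/

import Mathlib

open MeasureTheory Set Filter

/-- The (junk-convention) primitive of any function is a.e. strongly measurable on `[0, T]`. -/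
lemma aesm_primitive {E : Type*} [NormedAddCommGroup E] [NormedSpace ℝ E] (g : ℝ → E) (T : ℝ) :
    AEStronglyMeasurable (fun s => ∫ r in (0:ℝ)..s, g r) (volume.restrict (Icc (0:ℝ) T)) := by
  set h : ℝ → E := fun s => ∫ r in (0:ℝ)..s, g r with hh
  set S : Set ℝ := {s : ℝ | 0 ≤ s ∧ IntegrableOn g (Ioc 0 s) volume} with hS
  have hSord : S.OrdConnected := by
    constructor
    intro a ha b hb c hc
    exact ⟨le_trans ha.1 hc.1, hb.2.mono_set (Ioc_subset_Ioc le_rfl hc.2)⟩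
  have hSmeas : MeasurableSet S := hSord.measurableSet
  have hcont : ∀ b ∈ S, ContinuousOn h (Icc 0 b) := by
    intro b hb
    have hInt : IntegrableOn g (Icc 0 b) volume := by
      rw [integrableOn_Icc_iff_integrableOn_Ioc]; exact hb.2
    have := intervalIntegral.continuousOn_primitive (f := g) (μ := volume) hInt
    refine this.congr fun s hs => ?_
    rw [hh]
    exact intervalIntegral.integral_of_le hs.1
  have hcontS : ContinuousOn h S := by
    intro s₀ hs₀
    by_cases hbig : ∃ b ∈ S, s₀ < b
    · obtain ⟨b, hb, hlt⟩ := hbig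
      have h1 : ContinuousWithinAt h (Icc 0 b) s₀ := hcont b hb s₀ ⟨hs₀.1, hlt.le⟩
      have h2 : ContinuousWithinAt h (S ∩ Iio b) s₀ :=
        h1.mono fun c hc => ⟨hc.1.1, hc.2.le⟩
      rwa [continuousWithinAt_inter (Iio_mem_nhds hlt)] at h2
    · push_neg at hbig
      have h1 : ContinuousWithinAt h (Icc 0 s₀) s₀ := hcont s₀ hs₀ s₀ ⟨hs₀.1, le_rfl⟩
      exact h1.mono fun c hc => ⟨hc.1, hbig c hc⟩
  have heq : ∀ s ∈ Icc (0:ℝ) T, h s = S.indicator h s := by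
    intro s hs
    by_cases hsS : s ∈ S
    · rw [indicator_of_mem hsS]
    · rw [indicator_of_notMem hsS, hh]
      simp only
      apply intervalIntegral.integral_undef
      rw [intervalIntegrable_iff, uIoc_of_le hs.1]
      intro hcon
      exact hsS ⟨hs.1, hcon⟩
  have hind : AEStronglyMeasurable (S.indicator h) (volume.restrict (Icc (0:ℝ) T)) := by
    rw [aestronglyMeasurable_indicator_iff hSmeas]
    have := (hcontS.aestronglyMeasurable hSmeas : AEStronglyMeasurable h (volume.restrict S))
    refine this.mono_measure ?_
    rw [Measure.restrict_restrict hSmeas]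
    exact Measure.restrict_mono inter_subset_left le_rfl
  refine hind.congr ?_
  rw [EventuallyEq, ae_restrict_iff' measurableSet_Icc]
  exact ae_of_all _ fun s hs => (heq s hs).symm

set_option maxHeartbeats 1000000 in
/-- Closedness of control-affine trajectories under weak convergence of controls:
if `uₙ ⇀ ū` weakly in `L²`, `xₙ₀ → x̄₀`, and the trajectories `xₙ` of
`ẋ = f₁(x) + f₂(x)·uₙ` with `xₙ(0) = xₙ₀` converge uniformly to `x̂`, then `x̂` is the
trajectory of `ẋ = f₁(x) + f₂(x)·ū` with initial condition `x̄₀`. -/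
theorem stmt_10 (n m : ℕ) (T : ℝ) (hT : 0 < T)
    (f₁ : EuclideanSpace ℝ (Fin n) → EuclideanSpace ℝ (Fin n))
    (f₂ : EuclideanSpace ℝ (Fin n) → (EuclideanSpace ℝ (Fin m) →L[ℝ] EuclideanSpace ℝ (Fin n)))
    (hf₁ : Continuous f₁) (hf₂ : Continuous f₂)
    (u : ℕ → ℝ → EuclideanSpace ℝ (Fin m)) (ubar : ℝ → EuclideanSpace ℝ (Fin m))
    (hu : ∀ k, MemLp (u k) 2 (volume.restrict (Icc (0:ℝ) T)))
    (hubar : MemLp ubar 2 (volume.restrict (Icc (0:ℝ) T)))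
    (hweak : ∀ v : ℝ → EuclideanSpace ℝ (Fin m),
      MemLp v 2 (volume.restrict (Icc (0:ℝ) T)) →
      Tendsto (fun k => ∫ t in Icc (0:ℝ) T, inner ℝ (u k t) (v t) : ℕ → ℝ) atTop
        (nhds (∫ t in Icc (0:ℝ) T, inner ℝ (ubar t) (v t))))
    (x₀ : ℕ → EuclideanSpace ℝ (Fin n)) (xbar₀ : EuclideanSpace ℝ (Fin n))
    (hx₀ : Tendsto x₀ atTop (nhds xbar₀))
    (x : ℕ → ℝ → EuclideanSpace ℝ (Fin n)) (xhat : ℝ → EuclideanSpace ℝ (Fin n))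
    (htraj : ∀ k, ∀ t ∈ Icc (0:ℝ) T,
      x k t = x₀ k + ∫ s in (0:ℝ)..t, (f₁ (x k s) + f₂ (x k s) (u k s)))
    (hunif : TendstoUniformlyOn x xhat atTop (Icc (0:ℝ) T)) :
    ∀ t ∈ Icc (0:ℝ) T,
      xhat t = xbar₀ + ∫ s in (0:ℝ)..t, (f₁ (xhat s) + f₂ (xhat s) (ubar s)) := by
  set μT := volume.restrict (Icc (0:ℝ) T) with hμT
  set g : ℕ → ℝ → EuclideanSpace ℝ (Fin n) := fun k s => f₁ (x k s) + f₂ (x k s) (u k s) with hg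
  set gh : ℝ → EuclideanSpace ℝ (Fin n) := fun s => f₁ (xhat s) + f₂ (xhat s) (ubar s) with hgh
  have htraj' : ∀ k, ∀ r ∈ Icc (0:ℝ) T, x k r = x₀ k + ∫ s in (0:ℝ)..r, g k s := htraj
  show ∀ t ∈ Icc (0:ℝ) T, xhat t = xbar₀ + ∫ s in (0:ℝ)..t, gh s
  -- pointwise convergence
  have hptw : ∀ s ∈ Icc (0:ℝ) T, Tendsto (fun k => x k s) atTop (nhds (xhat s)) :=
    fun s hs => hunif.tendsto_at hs
  -- measurability of trajectories
  have hxm : ∀ k, AEStronglyMeasurable (x k) μT := by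
    intro k
    have h1 : AEStronglyMeasurable (fun s => x₀ k + ∫ r in (0:ℝ)..s, g k r) μT :=
      aestronglyMeasurable_const.add (aesm_primitive (g k) T)
    refine h1.congr ?_
    rw [EventuallyEq, ae_restrict_iff' measurableSet_Icc]
    exact ae_of_all _ fun s hs => (htraj' k s hs).symm
  have hxhm : AEStronglyMeasurable xhat μT := by
    refine aestronglyMeasurable_of_tendsto_ae atTop hxm ?_
    rw [ae_restrict_iff' measurableSet_Icc]
    exact ae_of_all _ fun s hs => hptw s hs
  -- uniform closeness
  obtain ⟨N₁, hN₁⟩ : ∃ N₁, ∀ k ≥ N₁, ∀ s ∈ Icc (0:ℝ) T, dist (x k s) (xhat s) < 1 := by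
    rw [Metric.tendstoUniformlyOn_iff] at hunif
    obtain ⟨N₁, hN₁⟩ := eventually_atTop.1 (hunif 1 one_pos)
    exact ⟨N₁, fun k hk s hs => by rw [dist_comm]; exact hN₁ k hk s hs⟩
  -- uniform L² bound on the controls
  obtain ⟨Cu, hCu0, hCu⟩ : ∃ Cu, 0 ≤ Cu ∧ ∀ k, (∫ s in Icc (0:ℝ) T, ‖u k s‖ * ‖u k s‖) ≤ Cu * Cu := by
    have key : ∀ v : Lp (EuclideanSpace ℝ (Fin m)) 2 μT,
        ∃ C, ∀ k, ‖(innerSL ℝ ((hu k).toLp (u k))) v‖ ≤ C := by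
      intro v
      have h2 : ∀ k, (innerSL ℝ ((hu k).toLp (u k))) v = ∫ s in Icc (0:ℝ) T, inner ℝ (u k s) (v s) := by
        intro k
        rw [innerSL_apply_apply, L2.inner_def]
        refine integral_congr_ae ?_
        filter_upwards [(hu k).coeFn_toLp] with a ha
        rw [ha]
      have h1 := hweak (fun s => v s) (Lp.memLp v)
      have h1' : Tendsto (fun k => (innerSL ℝ ((hu k).toLp (u k))) v) atTop
          (nhds (∫ s in Icc (0:ℝ) T, inner ℝ (ubar s) (v s))) := by
        refine h1.congr fun k => (h2 k).symm
      obtain ⟨C, hC⟩ := h1'.norm.bddAbove_range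
      exact ⟨C, fun k => hC ⟨k, rfl⟩⟩
    obtain ⟨C', hC'⟩ := banach_steinhaus key
    refine ⟨max C' 0, le_max_right _ _, fun k => ?_⟩
    have hn : ‖(hu k).toLp (u k)‖ ≤ max C' 0 := by
      have := hC' k
      rw [innerSL_apply_norm] at this
      exact le_trans this (le_max_left _ _)
    have h3 : (∫ s in Icc (0:ℝ) T, ‖u k s‖ * ‖u k s‖)
        = (inner ℝ ((hu k).toLp (u k)) ((hu k).toLp (u k)) : ℝ) := by
      rw [L2.inner_def]
      refine integral_congr_ae ?_
      filter_upwards [(hu k).coeFn_toLp] with a ha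
      rw [ha, real_inner_self_eq_norm_mul_norm]
    rw [h3, real_inner_self_eq_norm_mul_norm]
    exact mul_le_mul hn hn (norm_nonneg _) (le_max_right _ _)
  have hu2 : ∀ k, Integrable (fun s => ‖u k s‖ * ‖u k s‖) μT := by
    intro k
    have := (hu k).integrable_norm_rpow (by norm_num) (by norm_num)
    refine this.congr ?_
    refine ae_of_all _ fun a => ?_
    have h2 : ((2:ENNReal)).toReal = ((2:ℕ):ℝ) := by simp
    simp only [h2, Real.rpow_natCast]
    ring
  -- the main "bounded case" result
  have hgood : ∀ t ∈ Icc (0:ℝ) T, ∀ M : ℝ, (∀ s ∈ Icc (0:ℝ) t, ‖xhat s‖ ≤ M) →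
      xhat t = xbar₀ + ∫ s in (0:ℝ)..t, gh s := by
    intro t ht M hM
    have h0t : (0:ℝ) ≤ t := ht.1
    have hIccsub : Icc (0:ℝ) t ⊆ Icc 0 T := Icc_subset_Icc le_rfl ht.2
    have hIocsub : Ioc (0:ℝ) t ⊆ Icc 0 T := fun r hr => ⟨hr.1.le, le_trans hr.2 ht.2⟩
    have hIocIcc : Ioc (0:ℝ) t ⊆ Icc 0 t := Ioc_subset_Icc_self
    have hM0 : 0 ≤ M := le_trans (norm_nonneg _) (hM 0 ⟨le_rfl, h0t⟩)
    set μ0 := volume.restrict (Ioc (0:ℝ) t) with hμ0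
    have hμ0le : μ0 ≤ μT := Measure.restrict_mono hIocsub le_rfl
    -- compact bounds
    obtain ⟨C₁, hC₁⟩ := (isCompact_closedBall (0 : EuclideanSpace ℝ (Fin n)) (M+1)).exists_bound_of_continuousOn hf₁.continuousOn
    obtain ⟨C₂, hC₂⟩ := (isCompact_closedBall (0 : EuclideanSpace ℝ (Fin n)) (M+1)).exists_bound_of_continuousOn hf₂.continuousOn
    have h0ball : (0 : EuclideanSpace ℝ (Fin n)) ∈ Metric.closedBall (0 : EuclideanSpace ℝ (Fin n)) (M+1) := by
      simp [Metric.mem_closedBall]; linarith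
    have hC₂0 : 0 ≤ C₂ := le_trans (norm_nonneg _) (hC₂ 0 h0ball)
    have hball : ∀ y : EuclideanSpace ℝ (Fin n), ‖y‖ ≤ M + 1 → y ∈ Metric.closedBall (0 : EuclideanSpace ℝ (Fin n)) (M+1) := by
      intro y hy; simpa [Metric.mem_closedBall, dist_zero_right] using hy
    have hxhatK : ∀ s ∈ Icc (0:ℝ) t, ‖xhat s‖ ≤ M + 1 := fun s hs => le_trans (hM s hs) (by linarith)
    have hxkK : ∀ k ≥ N₁, ∀ s ∈ Icc (0:ℝ) t, ‖x k s‖ ≤ M + 1 := by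
      intro k hk s hs
      have h1 := hN₁ k hk s (hIccsub hs)
      rw [dist_eq_norm] at h1
      have h2 := norm_sub_norm_le (x k s) (xhat s)
      have := hM s hs
      linarith
    -- measurability of the bilinear term
    have hmes : ∀ (y : ℝ → EuclideanSpace ℝ (Fin n)) (w : ℝ → EuclideanSpace ℝ (Fin m)),
        AEStronglyMeasurable y μT → AEStronglyMeasurable w μT →
        AEStronglyMeasurable (fun s => f₂ (y s) (w s)) μT := by
      intro y w hy hw
      exact isBoundedBilinearMap_apply.continuous.comp_aestronglyMeasurable
        ((hf₂.comp_aestronglyMeasurable hy).prodMk hw)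
    -- integrability of the two kinds of terms
    have hint1 : ∀ (y : ℝ → EuclideanSpace ℝ (Fin n)), AEStronglyMeasurable y μT →
        (∀ s ∈ Icc (0:ℝ) t, ‖y s‖ ≤ M + 1) →
        IntegrableOn (fun s => f₁ (y s)) (Ioc 0 t) volume := by
      intro y hy hyb
      refine Integrable.mono' (integrable_const C₁)
        ((hf₁.comp_aestronglyMeasurable hy).mono_measure hμ0le) ?_
      rw [ae_restrict_iff' measurableSet_Ioc]
      exact ae_of_all _ fun s hs => hC₁ _ (hball _ (hyb s (hIocIcc hs)))
    have hint2 : ∀ (y : ℝ → EuclideanSpace ℝ (Fin n)) (w : ℝ → EuclideanSpace ℝ (Fin m)),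
        AEStronglyMeasurable y μT → MemLp w 2 μT →
        (∀ s ∈ Icc (0:ℝ) t, ‖y s‖ ≤ M + 1) →
        IntegrableOn (fun s => f₂ (y s) (w s)) (Ioc 0 t) volume := by
      intro y w hy hw hyb
      have hwi : Integrable w μ0 :=
        (memLp_one_iff_integrable.1 ((hw.mono_exponent one_le_two))).mono_measure hμ0le
      refine Integrable.mono' (hwi.norm.const_mul C₂)
        ((hmes y w hy hw.aestronglyMeasurable).mono_measure hμ0le) ?_
      rw [ae_restrict_iff' measurableSet_Ioc]
      refine ae_of_all _ fun s hs => ?_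
      calc ‖f₂ (y s) (w s)‖ ≤ ‖f₂ (y s)‖ * ‖w s‖ := (f₂ (y s)).le_opNorm _
        _ ≤ C₂ * ‖w s‖ :=
          mul_le_mul_of_nonneg_right (hC₂ _ (hball _ (hyb s (hIocIcc hs)))) (norm_nonneg _)
    have hf1hat : IntegrableOn (fun s => f₁ (xhat s)) (Ioc 0 t) volume := hint1 xhat hxhm hxhatK
    have hf2hatubar : IntegrableOn (fun s => f₂ (xhat s) (ubar s)) (Ioc 0 t) volume :=
      hint2 xhat ubar hxhm hubar hxhatK
    have hf2hatuk : ∀ k, IntegrableOn (fun s => f₂ (xhat s) (u k s)) (Ioc 0 t) volume :=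
      fun k => hint2 xhat (u k) hxhm (hu k) hxhatK
    have hghi : IntegrableOn gh (Ioc 0 t) volume := hf1hat.add hf2hatubar
    -- (A1) the drift term converges
    have hA1 : Tendsto (fun k => ∫ s in Ioc (0:ℝ) t, f₁ (x k s)) atTop
        (nhds (∫ s in Ioc (0:ℝ) t, f₁ (xhat s))) := by
      refine tendsto_integral_filter_of_dominated_convergence (bound := fun _ => C₁) ?_ ?_ ?_ ?_
      · filter_upwards with k
        exact (hf₁.comp_aestronglyMeasurable (hxm k)).mono_measure hμ0le
      · filter_upwards [eventually_ge_atTop N₁] with k hk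
        rw [ae_restrict_iff' measurableSet_Ioc]
        exact ae_of_all _ fun s hs => hC₁ _ (hball _ (hxkK k hk s (hIocIcc hs)))
      · exact integrable_const _
      · rw [ae_restrict_iff' measurableSet_Ioc]
        exact ae_of_all _ fun s hs => (hf₁.tendsto _).comp (hptw s (hIocsub hs))
    -- the mismatch term goes to 0
    have hD : Tendsto (fun k => (∫ s in Ioc (0:ℝ) t, f₂ (x k s) (u k s)) -
        ∫ s in Ioc (0:ℝ) t, f₂ (xhat s) (u k s)) atTop (nhds 0) := by
      -- L² distance of the operator-valued coefficients
      have hr : Tendsto (fun k => ∫ s in Ioc (0:ℝ) t,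
          ‖f₂ (x k s) - f₂ (xhat s)‖ * ‖f₂ (x k s) - f₂ (xhat s)‖) atTop (nhds 0) := by
        have hr' : Tendsto (fun k => ∫ s in Ioc (0:ℝ) t,
            ‖f₂ (x k s) - f₂ (xhat s)‖ * ‖f₂ (x k s) - f₂ (xhat s)‖) atTop
            (nhds (∫ s in Ioc (0:ℝ) t, (0:ℝ))) := by
          refine tendsto_integral_filter_of_dominated_convergence (μ := μ0) (ι := ℕ) (l := atTop)
            (f := fun _ => (0:ℝ)) (bound := fun _ => (2*C₂) * (2*C₂)) ?_ ?_ ?_ ?_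
          · filter_upwards with k
            have hd : AEStronglyMeasurable (fun s => f₂ (x k s) - f₂ (xhat s)) μ0 :=
              (((hf₂.comp_aestronglyMeasurable (hxm k)).sub
                (hf₂.comp_aestronglyMeasurable hxhm))).mono_measure hμ0le
            exact hd.norm.mul hd.norm
          · filter_upwards [eventually_ge_atTop N₁] with k hk
            rw [ae_restrict_iff' measurableSet_Ioc]
            refine ae_of_all _ fun s hs => ?_
            have h1 : ‖f₂ (x k s) - f₂ (xhat s)‖ ≤ 2 * C₂ := by
              have := hC₂ _ (hball _ (hxkK k hk s (hIocIcc hs)))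
              have := hC₂ _ (hball _ (hxhatK s (hIocIcc hs)))
              have := norm_sub_le (f₂ (x k s)) (f₂ (xhat s))
              linarith
            have h2 : ‖f₂ (x k s) - f₂ (xhat s)‖ * ‖f₂ (x k s) - f₂ (xhat s)‖ ≤ 2*C₂*(2*C₂) :=
              mul_le_mul h1 h1 (norm_nonneg _) (by linarith)
            simpa [abs_of_nonneg (mul_nonneg (norm_nonneg (f₂ (x k s) - f₂ (xhat s))) (norm_nonneg (f₂ (x k s) - f₂ (xhat s))))] using h2
          · exact integrable_const _
          · rw [ae_restrict_iff' measurableSet_Ioc]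
            refine ae_of_all _ fun s hs => ?_
            have h1 : Tendsto (fun k => f₂ (x k s) - f₂ (xhat s)) atTop (nhds 0) := by
              have := ((hf₂.tendsto _).comp (hptw s (hIocsub hs))).sub
                (tendsto_const_nhds (x := f₂ (xhat s)))
              simpa using this
            have h2 : Tendsto (fun k => ‖f₂ (x k s) - f₂ (xhat s)‖) atTop (nhds 0) :=
              tendsto_zero_iff_norm_tendsto_zero.1 h1
            simpa using h2.mul h2
        simpa using hr'
      -- eventual bound via Cauchy-Schwarz
      rw [tendsto_zero_iff_norm_tendsto_zero]
      refine squeeze_zero' (g := fun k => (∫ s in Ioc (0:ℝ) t,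
          ‖f₂ (x k s) - f₂ (xhat s)‖ * ‖f₂ (x k s) - f₂ (xhat s)‖) ^ ((1:ℝ)/2) * Cu)
        (Eventually.of_forall fun k => norm_nonneg _) ?_ ?_
      · filter_upwards [eventually_ge_atTop N₁] with k hk
        have hk1 : IntegrableOn (fun s => f₂ (x k s) (u k s)) (Ioc 0 t) volume :=
          hint2 (x k) (u k) (hxm k) (hu k) (hxkK k hk)
        have hdm : AEStronglyMeasurable (fun s => f₂ (x k s) - f₂ (xhat s)) μ0 :=
          (((hf₂.comp_aestronglyMeasurable (hxm k)).sub
            (hf₂.comp_aestronglyMeasurable hxhm))).mono_measure hμ0le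
        have hdb : ∀ s ∈ Ioc (0:ℝ) t, ‖f₂ (x k s) - f₂ (xhat s)‖ ≤ 2 * C₂ := by
          intro s hs
          have := hC₂ _ (hball _ (hxkK k hk s (hIocIcc hs)))
          have := hC₂ _ (hball _ (hxhatK s (hIocIcc hs)))
          have := norm_sub_le (f₂ (x k s)) (f₂ (xhat s))
          linarith
        have hui : Integrable (fun s => ‖u k s‖) μ0 :=
          ((memLp_one_iff_integrable.1 (((hu k).mono_exponent
            one_le_two))).mono_measure hμ0le).norm
        have hprodint : Integrable (fun s => ‖f₂ (x k s) - f₂ (xhat s)‖ * ‖u k s‖) μ0 := by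
          refine hui.bdd_mul (c := 2*C₂) hdm.norm ?_
          rw [ae_restrict_iff' measurableSet_Ioc]
          exact ae_of_all _ fun s hs => by
            simpa [abs_of_nonneg (norm_nonneg (f₂ (x k s) - f₂ (xhat s)))] using hdb s hs
        -- step 1 : difference of integrals = integral of difference, then norm ≤ ∫ norm
        have e1 : (∫ s in Ioc (0:ℝ) t, f₂ (x k s) (u k s)) -
            (∫ s in Ioc (0:ℝ) t, f₂ (xhat s) (u k s))
            = ∫ s in Ioc (0:ℝ) t, (f₂ (x k s) - f₂ (xhat s)) (u k s) := by
          rw [← integral_sub hk1 (hf2hatuk k)]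
          refine integral_congr_ae (ae_of_all _ fun s => ?_)
          simp [ContinuousLinearMap.sub_apply]
        rw [e1]
        have e2 : ‖∫ s in Ioc (0:ℝ) t, (f₂ (x k s) - f₂ (xhat s)) (u k s)‖
            ≤ ∫ s in Ioc (0:ℝ) t, ‖f₂ (x k s) - f₂ (xhat s)‖ * ‖u k s‖ := by
          refine le_trans (norm_integral_le_integral_norm _) ?_
          refine integral_mono ?_ hprodint ?_
          · refine Integrable.mono' hprodint ?_ ?_
            · exact (isBoundedBilinearMap_apply.continuous.comp_aestronglyMeasurable
                (hdm.prodMk ((hu k).aestronglyMeasurable.mono_measure hμ0le))).norm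
            · exact ae_of_all _ fun s => by
                simpa [abs_of_nonneg (mul_nonneg (norm_nonneg _) (norm_nonneg _))] using
                  ((f₂ (x k s) - f₂ (xhat s)).le_opNorm (u k s))
          · exact fun s => (f₂ (x k s) - f₂ (xhat s)).le_opNorm (u k s)
        refine le_trans e2 ?_
        -- step 2 : Cauchy-Schwarz
        have hconj : Real.HolderConjugate 2 2 := Real.HolderConjugate.two_two
        have hmem1 : MemLp (fun s => ‖f₂ (x k s) - f₂ (xhat s)‖) (ENNReal.ofReal 2) μ0 := by
          have htop : MemLp (fun s => ‖f₂ (x k s) - f₂ (xhat s)‖) ⊤ μ0 := by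
            refine memLp_top_of_bound hdm.norm (2*C₂) ?_
            rw [ae_restrict_iff' measurableSet_Ioc]
            exact ae_of_all _ fun s hs => by
              simpa [abs_of_nonneg (norm_nonneg (f₂ (x k s) - f₂ (xhat s)))] using hdb s hs
          exact htop.mono_exponent le_top
        have hmem2 : MemLp (fun s => ‖u k s‖) (ENNReal.ofReal 2) μ0 := by
          have : MemLp (fun s => ‖u k s‖) 2 μ0 := ((hu k).norm).mono_measure hμ0le
          convert this using 2
          · norm_num
        have hcs := integral_mul_le_Lp_mul_Lq_of_nonneg (μ := μ0) hconj
          (ae_of_all _ fun s => norm_nonneg (f₂ (x k s) - f₂ (xhat s)))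
          (ae_of_all _ fun s => norm_nonneg (u k s)) hmem1 hmem2
        refine le_trans hcs ?_
        -- identify the squares and bound the u-factor
        have hrw2 : ∀ (h : ℝ → ℝ), (∀ s, 0 ≤ h s) →
            (∫ s, (h s) ^ (2:ℝ) ∂μ0) = ∫ s, h s * h s ∂μ0 := by
          intro h hh
          refine integral_congr_ae (ae_of_all _ fun s => ?_)
          show h s ^ (2:ℝ) = h s * h s
          rw [show ((2:ℝ)) = ((2:ℕ):ℝ) by norm_num, Real.rpow_natCast, sq]
        rw [hrw2 _ (fun s => norm_nonneg _), hrw2 _ (fun s => norm_nonneg _)]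
        refine mul_le_mul_of_nonneg_left ?_ ?_
        · -- (∫ ‖u k‖²)^(1/2) ≤ Cu
          have hb1 : (∫ s, ‖u k s‖ * ‖u k s‖ ∂μ0) ≤ Cu * Cu := by
            refine le_trans (setIntegral_mono_set (hu2 k) ?_ ?_) (hCu k)
            · exact ae_of_all _ fun s => mul_nonneg (norm_nonneg _) (norm_nonneg _)
            · exact HasSubset.Subset.eventuallyLE hIocsub
          have hnn : 0 ≤ ∫ s, ‖u k s‖ * ‖u k s‖ ∂μ0 :=
            integral_nonneg fun s => mul_nonneg (norm_nonneg _) (norm_nonneg _)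
          calc (∫ s, ‖u k s‖ * ‖u k s‖ ∂μ0) ^ ((1:ℝ)/2)
              ≤ (Cu * Cu) ^ ((1:ℝ)/2) := Real.rpow_le_rpow hnn hb1 (by norm_num)
            _ = Cu := by
                rw [show Cu * Cu = Cu ^ (2:ℝ) by
                    rw [show (2:ℝ) = ((2:ℕ):ℝ) by norm_num, Real.rpow_natCast]; ring,
                  ← Real.rpow_mul hCu0]
                norm_num [Real.rpow_one]
        · positivity
      · -- the product tends to 0
        have h1 : Tendsto (fun k => (∫ s in Ioc (0:ℝ) t,
            ‖f₂ (x k s) - f₂ (xhat s)‖ * ‖f₂ (x k s) - f₂ (xhat s)‖) ^ ((1:ℝ)/2)) atTop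
            (nhds 0) := by
          have := hr.rpow_const (p := (1:ℝ)/2) (Or.inr (by norm_num))
          simpa [Real.zero_rpow (by norm_num : ((1:ℝ)/2) ≠ 0)] using this
        simpa using h1.mul_const Cu
    -- (E) weak convergence of the frozen-coefficient term
    have hE : Tendsto (fun k => ∫ s in Ioc (0:ℝ) t, f₂ (xhat s) (u k s)) atTop
        (nhds (∫ s in Ioc (0:ℝ) t, f₂ (xhat s) (ubar s))) := by
      set b := EuclideanSpace.basisFun (Fin n) ℝ with hb
      have hcoord : ∀ i : Fin n, Tendsto
          (fun k => ∫ s in Ioc (0:ℝ) t, (inner ℝ (b i) (f₂ (xhat s) (u k s)) : ℝ)) atTop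
          (nhds (∫ s in Ioc (0:ℝ) t, (inner ℝ (b i) (f₂ (xhat s) (ubar s)) : ℝ))) := by
        intro i
        set v : ℝ → EuclideanSpace ℝ (Fin m) :=
          (Icc (0:ℝ) t).indicator (fun s => (ContinuousLinearMap.adjoint (f₂ (xhat s))) (b i))
          with hv
        have hvm : AEStronglyMeasurable (fun s =>
            (ContinuousLinearMap.adjoint (f₂ (xhat s))) (b i)) μT := by
          have h1 : AEStronglyMeasurable (fun s =>
              (ContinuousLinearMap.adjoint (f₂ (xhat s)))) μT :=
            (ContinuousLinearMap.adjoint.continuous.comp hf₂).comp_aestronglyMeasurable hxhm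
          exact isBoundedBilinearMap_apply.continuous.comp_aestronglyMeasurable
            (h1.prodMk aestronglyMeasurable_const)
        have hvmem : MemLp v 2 μT := by
          have haesm : AEStronglyMeasurable v μT := by
            rw [hv, aestronglyMeasurable_indicator_iff measurableSet_Icc]
            exact hvm.mono_measure Measure.restrict_le_self
          have htop : MemLp v ⊤ μT := by
            refine memLp_top_of_bound haesm C₂ ?_
            rw [ae_restrict_iff' measurableSet_Icc]
            refine ae_of_all _ fun s hs => ?_
            rw [hv]
            by_cases hst : s ∈ Icc (0:ℝ) t
            · rw [indicator_of_mem hst]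
              calc ‖(ContinuousLinearMap.adjoint (f₂ (xhat s))) (b i)‖
                  ≤ ‖ContinuousLinearMap.adjoint (f₂ (xhat s))‖ * ‖b i‖ :=
                    (ContinuousLinearMap.adjoint (f₂ (xhat s))).le_opNorm _
                _ ≤ C₂ := by
                    rw [ContinuousLinearMap.adjoint.norm_map, b.orthonormal.1 i, mul_one]
                    exact hC₂ _ (hball _ (hxhatK s hst))
            · rw [indicator_of_notMem hst]; simpa using hC₂0
          exact htop.mono_exponent le_top
        have h1 := hweak v hvmem
        have hrwv : ∀ w : ℝ → EuclideanSpace ℝ (Fin m),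
            (∫ s in Icc (0:ℝ) T, (inner ℝ (w s) (v s) : ℝ))
            = ∫ s in Ioc (0:ℝ) t, (inner ℝ (b i) (f₂ (xhat s) (w s)) : ℝ) := by
          intro w
          have e1 : (∫ s in Icc (0:ℝ) T, (inner ℝ (w s) (v s) : ℝ))
              = ∫ s in Icc (0:ℝ) T, (Icc (0:ℝ) t).indicator
                  (fun s => (inner ℝ (w s) ((ContinuousLinearMap.adjoint (f₂ (xhat s))) (b i)) : ℝ)) s := by
            refine integral_congr_ae (ae_of_all _ fun s => ?_)
            by_cases hst : s ∈ Icc (0:ℝ) t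
            · simp only [hv, indicator_of_mem hst]
            · simp only [hv, indicator_of_notMem hst, inner_zero_right]
          rw [e1, integral_indicator measurableSet_Icc]
          rw [Measure.restrict_restrict measurableSet_Icc,
            inter_eq_self_of_subset_left hIccsub, ← Measure.restrict_congr_set Ioc_ae_eq_Icc]
          refine integral_congr_ae (ae_of_all _ fun s => ?_)
          simp only [ContinuousLinearMap.adjoint_inner_right]
          exact real_inner_comm _ _
        have h2 : (fun k => ∫ s in Icc (0:ℝ) T, (inner ℝ (u k s) (v s) : ℝ))
            = fun k => ∫ s in Ioc (0:ℝ) t, (inner ℝ (b i) (f₂ (xhat s) (u k s)) : ℝ) :=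
          funext fun k => hrwv (u k)
        rw [h2, hrwv ubar] at h1
        exact h1
      have hrepr : ∀ (w : ℝ → EuclideanSpace ℝ (Fin m)),
          IntegrableOn (fun s => f₂ (xhat s) (w s)) (Ioc 0 t) volume →
          (∫ s in Ioc (0:ℝ) t, f₂ (xhat s) (w s))
          = ∑ i, (∫ s in Ioc (0:ℝ) t, (inner ℝ (b i) (f₂ (xhat s) (w s)) : ℝ)) • b i := by
        intro w hw
        conv_lhs => rw [← b.sum_repr (∫ s in Ioc (0:ℝ) t, f₂ (xhat s) (w s))]
        refine Finset.sum_congr rfl fun i _ => ?_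
        rw [b.repr_apply_apply, integral_inner hw]
      rw [hrepr ubar hf2hatubar]
      have h3 : (fun k => ∫ s in Ioc (0:ℝ) t, f₂ (xhat s) (u k s))
          = fun k => ∑ i, (∫ s in Ioc (0:ℝ) t, (inner ℝ (b i) (f₂ (xhat s) (u k s)) : ℝ)) • b i :=
        funext fun k => hrepr (u k) (hf2hatuk k)
      rw [h3]
      exact tendsto_finset_sum _ fun i _ => (hcoord i).smul_const (b i)
    -- combine
    have hA2 : Tendsto (fun k => ∫ s in Ioc (0:ℝ) t, f₂ (x k s) (u k s)) atTop
        (nhds (∫ s in Ioc (0:ℝ) t, f₂ (xhat s) (ubar s))) := by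
      have := hD.add hE
      simpa using this
    have hsum : Tendsto (fun k => ∫ s in Ioc (0:ℝ) t, g k s) atTop
        (nhds (∫ s in Ioc (0:ℝ) t, gh s)) := by
      have e1 : (∫ s in Ioc (0:ℝ) t, gh s) = (∫ s in Ioc (0:ℝ) t, f₁ (xhat s)) +
          ∫ s in Ioc (0:ℝ) t, f₂ (xhat s) (ubar s) := integral_add hf1hat hf2hatubar
      rw [e1]
      refine Tendsto.congr' ?_ (hA1.add hA2)
      filter_upwards [eventually_ge_atTop N₁] with k hk
      exact (integral_add (hint1 (x k) (hxm k) (hxkK k hk))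
        (hint2 (x k) (u k) (hxm k) (hu k) (hxkK k hk))).symm
    -- finish
    have h2 : Tendsto (fun k => x k t - x₀ k) atTop (nhds (xhat t - xbar₀)) :=
      (hptw t ht).sub hx₀
    have h3 : (fun k => x k t - x₀ k) = fun k => ∫ s in Ioc (0:ℝ) t, g k s := by
      funext k
      rw [htraj' k t ht, ← intervalIntegral.integral_of_le h0t]
      abel
    rw [h3] at h2
    have h4 : xhat t - xbar₀ = ∫ s in Ioc (0:ℝ) t, gh s := tendsto_nhds_unique h2 hsum
    rw [intervalIntegral.integral_of_le h0t, ← h4]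
    abel
  -- assembly
  intro t ht
  by_cases hbdd : ∃ M, ∀ s ∈ Icc (0:ℝ) t, ‖xhat s‖ ≤ M
  · obtain ⟨M, hM⟩ := hbdd; exact hgood t ht M hM
  · -- the trajectory `xhat` is unbounded on `[0, t]` : junk-value analysis
    -- first, a generic fact: if `xhat` is unbounded on `[0, s]` then for large `k`
    -- the integrand `g k` is not integrable on `(0, s]`, hence `x k s = x₀ k`.
    have hnotint : ∀ s, s ∈ Icc (0:ℝ) t → (¬ ∃ M, ∀ r ∈ Icc (0:ℝ) s, ‖xhat r‖ ≤ M) →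
        ∀ k ≥ N₁, x k s = x₀ k := by
      intro s hs hsunb k hk
      have hsT : s ∈ Icc (0:ℝ) T := ⟨hs.1, le_trans hs.2 ht.2⟩
      have hni : ¬ IntegrableOn (g k) (Ioc 0 s) volume := by
        intro hint
        have hcont : ContinuousOn (x k) (Icc 0 s) := by
          have h1 : ContinuousOn (fun r => x₀ k + ∫ q in Ioc (0:ℝ) r, g k q) (Icc 0 s) :=
            continuousOn_const.add (intervalIntegral.continuousOn_primitive
              ((integrableOn_Icc_iff_integrableOn_Ioc (f := g k)).2 hint))
          refine h1.congr fun r hr => ?_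
          rw [htraj' k r ⟨hr.1, le_trans hr.2 hsT.2⟩, intervalIntegral.integral_of_le hr.1]
        obtain ⟨Ck, hCk⟩ := isCompact_Icc.exists_bound_of_continuousOn hcont
        refine hsunb ⟨Ck + 1, fun r hr => ?_⟩
        have h1 := hN₁ k hk r ⟨hr.1, le_trans hr.2 hsT.2⟩
        rw [dist_eq_norm] at h1
        have h2 := norm_sub_norm_le (xhat r) (x k r)
        rw [norm_sub_rev] at h2
        have := hCk r hr
        linarith
      have hz : (∫ q in (0:ℝ)..s, g k q) = 0 := by
        apply intervalIntegral.integral_undef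
        rw [intervalIntegrable_iff, uIoc_of_le hs.1]
        exact hni
      rw [htraj' k s hsT, hz, add_zero]
    -- hence `xhat t = xbar₀`
    have hxt : xhat t = xbar₀ := by
      have h1 : Tendsto (fun k => x k t) atTop (nhds (xhat t)) := hptw t ht
      have h2 : (fun k => x k t) =ᶠ[atTop] x₀ := by
        filter_upwards [eventually_ge_atTop N₁] with k hk
        exact hnotint t ⟨ht.1, le_rfl⟩ hbdd k hk
      exact tendsto_nhds_unique (h1.congr' h2) hx₀
    -- and the limit integrand is itself not integrable
    have hghni : ¬ IntegrableOn gh (Ioc 0 t) volume := by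
      intro hint
      set B : Set ℝ := {τ ∈ Icc (0:ℝ) t | ∃ Mτ, ∀ s ∈ Icc (0:ℝ) τ, ‖xhat s‖ ≤ Mτ} with hB
      have h0B : (0:ℝ) ∈ B := by
        refine ⟨⟨le_rfl, ht.1⟩, ‖xhat 0‖, fun s hs => ?_⟩
        have : s = 0 := le_antisymm hs.2 hs.1
        rw [this]
      have hBbd : BddAbove B := ⟨t, fun τ hτ => hτ.1.2⟩
      set t' := sSup B with ht'
      have ht'mem : t' ∈ Icc (0:ℝ) t :=
        ⟨le_csSup hBbd h0B, csSup_le ⟨0, h0B⟩ fun τ hτ => hτ.1.2⟩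
      -- uniform bound below t'
      have hform : ∀ s, (∃ τ ∈ B, s ≤ τ) → 0 ≤ s →
          ‖xhat s‖ ≤ ‖xbar₀‖ + ∫ r in Ioc (0:ℝ) t, ‖gh r‖ := by
        rintro s ⟨τ, hτB, hsτ⟩ hs0
        have hsIcc : s ∈ Icc (0:ℝ) T := ⟨hs0, le_trans (le_trans hsτ hτB.1.2) ht.2⟩
        obtain ⟨Mτ, hMτ⟩ := hτB.2
        have heq := hgood s hsIcc Mτ (fun r hr => hMτ r ⟨hr.1, le_trans hr.2 hsτ⟩)
        rw [heq]
        refine le_trans (norm_add_le _ _) ?_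
        have h1 : ‖∫ r in (0:ℝ)..s, gh r‖ ≤ ∫ r in Ioc (0:ℝ) t, ‖gh r‖ := by
          rw [intervalIntegral.integral_of_le hs0]
          refine le_trans (norm_integral_le_integral_norm _) ?_
          refine setIntegral_mono_set hint.norm ?_ ?_
          · exact ae_of_all _ fun r => norm_nonneg _
          · exact HasSubset.Subset.eventuallyLE (Ioc_subset_Ioc le_rfl (le_trans hsτ hτB.1.2))
        linarith
      have ht'B : t' ∈ B := by
        refine ⟨ht'mem, max (‖xbar₀‖ + ∫ r in Ioc (0:ℝ) t, ‖gh r‖) ‖xhat t'‖, fun s hs => ?_⟩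
        by_cases hcase : ∃ τ ∈ B, s ≤ τ
        · exact le_trans (hform s hcase hs.1) (le_max_left _ _)
        · push_neg at hcase
          have h1 : t' ≤ s := csSup_le ⟨0, h0B⟩ fun τ hτ => (hcase τ hτ).le
          have h2 : s = t' := le_antisymm hs.2 h1
          rw [h2]; exact le_max_right _ _
      -- beyond t', `xhat` is constantly `xbar₀`
      have hbeyond : ∀ s ∈ Icc (0:ℝ) t, t' < s → xhat s = xbar₀ := by
        intro s hs hlt
        have hsunb : ¬ ∃ M, ∀ r ∈ Icc (0:ℝ) s, ‖xhat r‖ ≤ M := by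
          intro hMs
          exact absurd (le_csSup hBbd (⟨hs, hMs⟩ : s ∈ B)) (not_le.2 hlt)
        have h1 : Tendsto (fun k => x k s) atTop (nhds (xhat s)) :=
          hptw s ⟨hs.1, le_trans hs.2 ht.2⟩
        have h2 : (fun k => x k s) =ᶠ[atTop] x₀ := by
          filter_upwards [eventually_ge_atTop N₁] with k hk
          exact hnotint s hs hsunb k hk
        exact tendsto_nhds_unique (h1.congr' h2) hx₀
      -- so `xhat` is bounded on `[0, t]`, contradiction
      obtain ⟨Mt', hMt'⟩ := ht'B.2
      refine hbdd ⟨max Mt' ‖xbar₀‖, fun s hs => ?_⟩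
      by_cases hc : s ≤ t'
      · exact le_trans (hMt' s ⟨hs.1, hc⟩) (le_max_left _ _)
      · push_neg at hc
        rw [hbeyond s hs hc]
        exact le_max_right _ _
    have hz : (∫ s in (0:ℝ)..t, gh s) = 0 := by
      apply intervalIntegral.integral_undef
      rw [intervalIntegrable_iff, uIoc_of_le ht.1]
      exact hghni
    rw [hxt, hz, add_zero]
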